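/- Let d ≥ 1 and m ≥ 1 be integers and ν ∈ ℕ^d. Then there exists a downward closed set Λ ⊆ ℕ^d with #Λ ≤ m and ν ∈ Λ if and only if ∏_{j=1}^d (1 + ν_j) ≤ m. In other words, the union of all downward closed subsets of ℕ^d of cardinality at most m equals the hyperbolic cross {ν ∈ ℕ^d : ∏_{j=1}^d (1 + ν_j) ≤ m}. -/
import Mathlib


/-- A finite set `Λ ⊂ ℕ^d` is downward closed if `ν ∈ Λ` and `μ ≤ ν` (componentwise)
imply `μ ∈ Λ`. -/
def DownwardClosed {d : ℕ} (Λ : Finset (Fin d → ℕ)) : Prop :=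
  ∀ ν ∈ Λ, ∀ μ : Fin d → ℕ, μ ≤ ν → μ ∈ Λ

theorem statement5 (d m : ℕ) (hd : 1 ≤ d) (hm : 1 ≤ m) (ν : Fin d → ℕ) :
    (∃ Λ : Finset (Fin d → ℕ), DownwardClosed Λ ∧ Λ.card ≤ m ∧ ν ∈ Λ) ↔
      ∏ j, (1 + ν j) ≤ m := by
  have hcard : (Finset.Iic ν).card = ∏ j, (1 + ν j) := by
    rw [Pi.card_Iic]
    exact Finset.prod_congr rfl fun i _ => by rw [Nat.card_Iic, Nat.add_comm]
  constructor
  · rintro ⟨Λ, hDC, hcardΛ, hν⟩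
    have hsub : Finset.Iic ν ⊆ Λ := fun μ hμ => hDC ν hν μ (Finset.mem_Iic.mp hμ)
    calc ∏ j, (1 + ν j) = (Finset.Iic ν).card := hcard.symm
      _ ≤ Λ.card := Finset.card_le_card hsub
      _ ≤ m := hcardΛ
  · intro h
    exact ⟨Finset.Iic ν, fun x hx μ hμ => Finset.mem_Iic.mpr (le_trans hμ (Finset.mem_Iic.mp hx)),
      hcard ▸ h, Finset.mem_Iic.mpr le_rfl⟩
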